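/- Let M be a model for CTT_qe, let A_ε be a construction, and let φ be an assignment into the frame of M. Then V^M_φ(A_ε) = A_ε; that is, every construction denotes itself in every model under every assignment. -/

import Mathlib

namespace CTTqe

/-- Types of CTT_qe: individuals, truth values, constructions, function types. -/
inductive Ty : Type
  | iota : Ty
  | o : Ty
  | eps : Ty
  | arr : Ty → Ty → Ty
  deriving DecidableEq

/-- The logical constants of CTT_qe. -/
inductive LogConst : Ty → Type
  | eq (α : Ty) : LogConst (α.arr (α.arr .o))
  | isVar : LogConst (Ty.eps.arr .o)
  | isCon : LogConst (Ty.eps.arr .o)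
  | appC : LogConst (Ty.eps.arr (Ty.eps.arr .eps))
  | absC : LogConst (Ty.eps.arr (Ty.eps.arr .eps))
  | quoC : LogConst (Ty.eps.arr .eps)
  | isExpr (α : Ty) : LogConst (Ty.eps.arr .o)

/-- Constants: the logical constants plus denumerably many nonlogical constants
of each type. -/
inductive Const : Ty → Type
  | log {α : Ty} : LogConst α → Const α
  | nonlog (n : ℕ) (α : Ty) : Const α

/-- Eval-free expressions of CTT_qe: built from typed variables and constants by
application, abstraction, and quotation (of eval-free expressions). -/
inductive EExpr : Ty → Type
  | var (n : ℕ) (α : Ty) : EExpr α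
  | con {α : Ty} : Const α → EExpr α
  | app {α β : Ty} : EExpr (α.arr β) → EExpr α → EExpr β
  | lam (n : ℕ) (α : Ty) {β : Ty} (B : EExpr β) : EExpr (α.arr β)
  | quot {α : Ty} : EExpr α → EExpr Ty.eps

/-- Expressions of CTT_qe: as above, plus typed evaluation ⟦A_ε⟧_β.
Quotation may only be applied to eval-free expressions. -/
inductive Expr : Ty → Type
  | var (n : ℕ) (α : Ty) : Expr α
  | con {α : Ty} : Const α → Expr α
  | app {α β : Ty} : Expr (α.arr β) → Expr α → Expr β
  | lam (n : ℕ) (α : Ty) {β : Ty} (B : Expr β) : Expr (α.arr β)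
  | quot {α : Ty} : EExpr α → Expr Ty.eps
  | eval : Expr Ty.eps → (β : Ty) → Expr β

/-- An eval-free expression is in particular an expression. -/
def EExpr.toExpr : {α : Ty} → EExpr α → Expr α
  | _, .var n α => .var n α
  | _, .con c => .con c
  | _, .app F A => .app F.toExpr A.toExpr
  | _, .lam n α B => .lam n α B.toExpr
  | _, .quot A => .quot A

/-- Constructions of CTT_qe: generated from quotations of variables and constants
by the syntax constructors app, abs, quo. -/
inductive Construction : Type
  | quotVar (n : ℕ) (α : Ty) : Construction
  | quotCon {α : Ty} (c : Const α) : Construction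
  | app : Construction → Construction → Construction
  | abs : Construction → Construction → Construction
  | quo : Construction → Construction

/-- The map E from eval-free expressions to constructions:
E(x_α) = ⌜x_α⌝, E(c_α) = ⌜c_α⌝, E(F A) = app E(F) E(A),
E(λx. B) = abs E(x) E(B), E(⌜A⌝) = quo E(A). -/
def EExpr.toConstruction : {α : Ty} → EExpr α → Construction
  | _, .var n α => .quotVar n α
  | _, .con c => .quotCon c
  | _, .app F A => .app F.toConstruction A.toConstruction
  | _, .lam n α B => .abs (.quotVar n α) B.toConstruction
  | _, .quot A => .quo A.toConstruction

/-- A construction, regarded as an (eval-free) expression of type ε. -/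
def Construction.toEExpr : Construction → EExpr Ty.eps
  | .quotVar n α => .quot (.var n α)
  | .quotCon c => .quot (.con c)
  | .app A B => .app (.app (.con (.log .appC)) A.toEExpr) B.toEExpr
  | .abs A B => .app (.app (.con (.log .absC)) A.toEExpr) B.toEExpr
  | .quo A => .app (.con (.log .quoC)) A.toEExpr

/-- A frame of CTT_qe is determined by a nonempty domain of individuals. -/
structure Frame where
  Dι : Type
  nonempty : Nonempty Dι

/-- The domains of a frame: D_ι is the individuals, D_o the truth values,
D_ε the constructions, and D_{α→β} the set of ALL total functions D_α → D_β. -/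
def Frame.Dom (F : Frame) : Ty → Type
  | .iota => F.Dι
  | .o => Bool
  | .eps => Construction
  | .arr α β => F.Dom α → F.Dom β

/-- An interpretation: a frame together with an interpretation function on
constants satisfying the seven conditions on the logical constants. -/
structure Interp extends Frame where
  I : ∀ {α : Ty}, Const α → toFrame.Dom α
  I_eq : ∀ (α : Ty) (d₁ d₂ : toFrame.Dom α),
    I (.log (.eq α)) d₁ d₂ = true ↔ d₁ = d₂
  I_isVar : ∀ c : Construction,
    I (.log .isVar) c = true ↔ ∃ (n : ℕ) (α : Ty), c = .quotVar n α
  I_isCon : ∀ c : Construction,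
    I (.log .isCon) c = true ↔ ∃ (α : Ty) (k : Const α), c = .quotCon k
  I_app : ∀ A B : Construction, I (.log .appC) A B = Construction.app A B
  I_abs : ∀ A B : Construction, I (.log .absC) A B = Construction.abs A B
  I_quo : ∀ A : Construction, I (.log .quoC) A = Construction.quo A
  I_isExpr : ∀ (α : Ty) (c : Construction),
    I (.log (.isExpr α)) c = true ↔ ∃ B : EExpr α, c = B.toConstruction

/-- An assignment into a frame maps each variable of type α to an element of D_α. -/
def Assignment (F : Frame) : Type := ℕ → ∀ α : Ty, F.Dom α

/-- φ[x ↦ d]. -/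
def Assignment.update {F : Frame} (φ : Assignment F) (n : ℕ) (α : Ty)
    (d : F.Dom α) : Assignment F :=
  fun m β => if h : m = n ∧ β = α then cast ((congrArg F.Dom h.2).symm) d else φ m β

/-- A model of CTT_qe: an interpretation together with a valuation function
satisfying the six model conditions. -/
structure Model extends Interp where
  V : Assignment toFrame → ∀ {γ : Ty}, Expr γ → toFrame.Dom γ
  V_var : ∀ (φ : Assignment toFrame) (n : ℕ) (α : Ty), V φ (.var n α) = φ n α
  V_con : ∀ (φ : Assignment toFrame) {α : Ty} (c : Const α), V φ (.con c) = I c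
  V_app : ∀ (φ : Assignment toFrame) {α β : Ty} (F : Expr (α.arr β)) (A : Expr α),
    V φ (.app F A) = (V φ F) (V φ A)
  V_lam : ∀ (φ : Assignment toFrame) (n : ℕ) (α : Ty) {β : Ty} (B : Expr β)
    (d : toFrame.Dom α), V φ (.lam n α B) d = V (φ.update n α d) B
  V_quot : ∀ (φ : Assignment toFrame) {α : Ty} (A : EExpr α),
    V φ (.quot A) = A.toConstruction
  V_eval : ∀ (φ : Assignment toFrame) (A : Expr Ty.eps) (β : Ty) (B : EExpr β),
    V φ (.app (.con (.log (.isExpr β))) A) = true →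
    V φ A = B.toConstruction →
    V φ (.eval A β) = V φ B.toExpr

/-- A formula (expression of type o) is valid in a model if it denotes T
under every assignment. -/
def Model.Valid (M : Model) (A : Expr Ty.o) : Prop :=
  ∀ φ : Assignment M.toFrame, M.V φ A = true

/-- The equality formula A =_α B. -/
def eqExpr {α : Ty} (A B : Expr α) : Expr Ty.o :=
  .app (.app (.con (.log (.eq α))) A) B


/-- Every construction denotes itself in every model under
every assignment: V^M_φ(A_ε) = A_ε for every construction A_ε. -/
theorem construction_denotes_itself (M : Model) (A : Construction)
    (φ : Assignment M.toFrame) :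
    M.V φ A.toEExpr.toExpr = A := by
  induction A with
  | quotVar n α => simp [Construction.toEExpr, EExpr.toExpr, M.V_quot, EExpr.toConstruction]; rfl
  | quotCon c => simp [Construction.toEExpr, EExpr.toExpr, M.V_quot, EExpr.toConstruction]; rfl
  | app A B ihA ihB =>
      simp [Construction.toEExpr, EExpr.toExpr, M.V_app, M.V_con, ihA, ihB, M.I_app]; rfl
  | abs A B ihA ihB =>
      simp [Construction.toEExpr, EExpr.toExpr, M.V_app, M.V_con, ihA, ihB, M.I_abs]; rfl
  | quo A ihA =>
      simp [Construction.toEExpr, EExpr.toExpr, M.V_app, M.V_con, ihA, M.I_quo]; rfl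

end CTTqe
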